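/- For any a ≥ 0 and t > 0, ∫_{-∞}^{a - 1/t} [exp(-t²(λ-a)²)/(2√π·t(a-λ))]·(|λ| + 1/π) dλ ≤ (a+1)/(4t) + 1/(4t²). -/

import Mathlib

open Real MeasureTheory

lemma gauss_int_Iio (a t : ℝ) (ht : 0 < t) :
    (∫ l in Set.Iio a, Real.exp (-t ^ 2 * (l - a) ^ 2)) = Real.sqrt π / (2 * t) := by
  have A : MeasurableEmbedding fun x : ℝ => x + a :=
    (Homeomorph.addRight a).measurableEmbedding
  have hmap := MeasurableEmbedding.setIntegral_map (μ := volume) A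
    (fun l => Real.exp (-t ^ 2 * (l - a) ^ 2)) (Set.Iio a)
  rw [show Measure.map (fun x : ℝ => x + a) volume = volume from
    map_add_right_eq_self volume a] at hmap
  have hpre : (fun x : ℝ => x + a) ⁻¹' Set.Iio a = Set.Iio 0 := by
    ext x; simp [Set.mem_Iio]
  rw [hmap, hpre]
  have h1 : (∫ x in Set.Iio (0:ℝ), Real.exp (-t ^ 2 * (x + a - a) ^ 2))
      = ∫ x in Set.Iic (0:ℝ), Real.exp (-t ^ 2 * x ^ 2) := by
    rw [← integral_Iic_eq_integral_Iio]
    congr 1; ext x; ring_nf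
  rw [h1]
  have h2 : (∫ x in Set.Iic (0:ℝ), Real.exp (-t ^ 2 * x ^ 2))
      = ∫ x in Set.Ioi (-(0:ℝ)), Real.exp (-t ^ 2 * x ^ 2) := by
    rw [← integral_comp_neg_Iic]
    congr 1; ext x; ring_nf
  rw [h2, neg_zero, integral_gaussian_Ioi]
  rw [Real.sqrt_div pi_pos.le, Real.sqrt_sq ht.le]
  ring

theorem I1_integral_bound (a t : ℝ) (ha : 0 ≤ a) (ht : 0 < t) :
    (∫ l in Set.Iio (a - 1 / t),
        Real.exp (-t ^ 2 * (l - a) ^ 2) / (2 * Real.sqrt π * (t * (a - l))) *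
          (|l| + 1 / π)) ≤
      (a + 1) / (4 * t) + 1 / (4 * t ^ 2) := by
  have hπ : 0 < Real.sqrt π := Real.sqrt_pos.mpr pi_pos
  set c := a - 1 / t with hc
  set C := (a + 1) / (2 * Real.sqrt π) + 1 / (2 * Real.sqrt π * t) with hCdef
  have hCpos : 0 ≤ C := by positivity
  have hg : Integrable (fun l : ℝ => Real.exp (-t ^ 2 * (l - a) ^ 2)) := by
    have h := integrable_exp_neg_mul_sq (show (0:ℝ) < t ^ 2 by positivity)
    exact h.comp_sub_right a
  have hgC : Integrable (fun l : ℝ => C * Real.exp (-t ^ 2 * (l - a) ^ 2)) := hg.const_mul C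
  have step1 : (∫ l in Set.Iio c,
      Real.exp (-t ^ 2 * (l - a) ^ 2) / (2 * Real.sqrt π * (t * (a - l))) * (|l| + 1 / π))
      ≤ ∫ l in Set.Iio c, C * Real.exp (-t ^ 2 * (l - a) ^ 2) := by
    apply integral_mono_of_nonneg
    · filter_upwards [ae_restrict_mem measurableSet_Iio] with l hl
      have hl' : l < a - 1 / t := hl
      have hal : 1 / t < a - l := by linarith
      have h0t : 0 < 1 / t := by positivity
      have hD : 0 < t * (a - l) := mul_pos ht (by linarith)
      have habs : 0 ≤ |l| + 1 / π := by positivity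
      exact mul_nonneg (div_nonneg (Real.exp_pos _).le
        (mul_pos (by positivity) hD).le) habs
    · exact hgC.integrableOn
    · filter_upwards [ae_restrict_mem measurableSet_Iio] with l hl
      have hl' : l < a - 1 / t := hl
      have h0t : 0 < 1 / t := by positivity
      have hal : 1 / t < a - l := by linarith
      have hD : (1:ℝ) ≤ t * (a - l) := by
        rw [← mul_one_div_cancel ht.ne']
        exact mul_le_mul_of_nonneg_left hal.le ht.le
      have hDpos : (0:ℝ) < t * (a - l) := lt_of_lt_of_le one_pos hD
      have hla : l < a := by linarith
      have habs : |l| + 1 / π ≤ (a + 1) + (a - l) := by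
        have h1 : |l| ≤ 2 * a - l := by
          rcases abs_cases l with ⟨h, _⟩ | ⟨h, _⟩ <;> linarith
        have h2 : 1 / π ≤ 1 := by
          rw [div_le_one pi_pos]; linarith [Real.pi_gt_three]
        linarith
      have key : (|l| + 1 / π) / (2 * Real.sqrt π * (t * (a - l))) ≤ C := by
        calc (|l| + 1 / π) / (2 * Real.sqrt π * (t * (a - l)))
            ≤ ((a + 1) + (a - l)) / (2 * Real.sqrt π * (t * (a - l))) := by
              apply div_le_div_of_nonneg_right habs (by positivity)
          _ = (a + 1) / (2 * Real.sqrt π * (t * (a - l))) + 1 / (2 * Real.sqrt π * t) := by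
              have hne : a - l ≠ 0 := by linarith
              field_simp
          _ ≤ C := by
              rw [hCdef]
              apply add_le_add_left
              apply div_le_div_of_nonneg_left (by linarith) (by positivity)
              exact le_mul_of_one_le_right (by positivity) hD
      calc Real.exp (-t ^ 2 * (l - a) ^ 2) / (2 * Real.sqrt π * (t * (a - l))) * (|l| + 1 / π)
          = Real.exp (-t ^ 2 * (l - a) ^ 2)
            * ((|l| + 1 / π) / (2 * Real.sqrt π * (t * (a - l)))) := by ring
        _ ≤ Real.exp (-t ^ 2 * (l - a) ^ 2) * C :=
            mul_le_mul_of_nonneg_left key (Real.exp_pos _).le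
        _ = C * Real.exp (-t ^ 2 * (l - a) ^ 2) := by ring
  have step2 : (∫ l in Set.Iio c, C * Real.exp (-t ^ 2 * (l - a) ^ 2))
      ≤ C * (Real.sqrt π / (2 * t)) := by
    rw [integral_const_mul]
    apply mul_le_mul_of_nonneg_left _ hCpos
    rw [← gauss_int_Iio a t ht]
    apply setIntegral_mono_set hg.integrableOn
    · filter_upwards with l using (Real.exp_pos _).le
    · have hca : c ≤ a := by
        rw [hc]; have : 0 < 1 / t := by positivity
        linarith
      exact HasSubset.Subset.eventuallyLE (Set.Iio_subset_Iio hca)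
  have heq : C * (Real.sqrt π / (2 * t)) = (a + 1) / (4 * t) + 1 / (4 * t ^ 2) := by
    rw [hCdef]
    field_simp
    ring
  linarith [step1, step2]
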